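/- Let D = (U,E) be an acyclic digraph on U ⊇ V such that N_V(D) is a full-dimensional subset of N(G), where G is a chain graph whose bidirected part contains a chordless cycle on nodes [p] = {1,…,p}, p ≥ 4, and A = an(C) the ancestors of the chain component C containing [p]. Then a proper directed path in D whose target lies in A cannot contain any edge of E_A(1,2). -/

import Mathlib

open Matrix BigOperators

def SupportedOn {V : Type} (E : V → V → Prop) (Λ : Matrix V V ℝ) : Prop :=
  ∀ u v, ¬ E u v → Λ u v = 0

def Acyclic {V : Type} (E : V → V → Prop) : Prop :=
  ∀ v, ¬ Relation.TransGen E v v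

def cycAdj (p : ℕ) (i j : Fin p) : Prop :=
  (i.1 + 1) % p = j.1 ∨ (j.1 + 1) % p = i.1

structure Trek {V : Type} (E : V → V → Prop) (u v : V) where
  left : List V
  right : List V
  left_ne : left ≠ []
  right_ne : right ≠ []
  top_eq : left.head left_ne = right.head right_ne
  chain_left : List.Chain' E left
  chain_right : List.Chain' E right
  last_left : left.getLast left_ne = u
  last_right : right.getLast right_ne = v

def Trek.top {V : Type} {E : V → V → Prop} {u v : V} (τ : Trek E u v) : V :=
  τ.left.head τ.left_ne

def edgeProd {V : Type} (Λ : Matrix V V ℝ) (l : List V) : ℝ :=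
  ((l.zip l.tail).map fun p => Λ p.1 p.2).prod

def Trek.mono {V : Type} {E : V → V → Prop} {u v : V} (Λ Ω : Matrix V V ℝ)
    (τ : Trek E u v) : ℝ :=
  Ω τ.top τ.top * edgeProd Λ τ.left * edgeProd Λ τ.right

structure TrekSystem {V : Type} (E : V → V → Prop) {n : ℕ} (x y : Fin n → V) where
  perm : Equiv.Perm (Fin n)
  trek : ∀ i, Trek E (x i) (y (perm i))

def TrekSystem.NoSided {V : Type} {E : V → V → Prop} {n : ℕ} {x y : Fin n → V}
    (S : TrekSystem E x y) : Prop :=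
  ∀ i j, i ≠ j →
    (∀ a : V, ¬(a ∈ (S.trek i).left ∧ a ∈ (S.trek j).left)) ∧
    (∀ a : V, ¬(a ∈ (S.trek i).right ∧ a ∈ (S.trek j).right))

structure DWalk {U : Type} (E : U → U → Prop) (u v : U) where
  steps : List (Bool × U × U)
  ne : steps ≠ []
  first_eq : (steps.head ne).2.1 = u
  last_eq : (steps.getLast ne).2.2 = v
  edge : ∀ s ∈ steps, (s.1 = true → E s.2.1 s.2.2) ∧ (s.1 = false → E s.2.2 s.2.1)
  chain : List.Chain' (fun s t : Bool × U × U => s.2.2 = t.2.1) steps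

def stepPairOK {U : Type} (A : Set U) (s t : Bool × U × U) : Prop :=
  ((s.1 = true ∧ t.1 = false) → s.2.2 ∈ A) ∧ (¬(s.1 = true ∧ t.1 = false) → s.2.2 ∉ A)

def DWalk.DConn {U : Type} {E : U → U → Prop} {u v : U} (A : Set U)
    (w : DWalk E u v) : Prop :=
  List.Chain' (stepPairOK A) w.steps

def topOf {U : Type} : List (Bool × U × U) → U → U
  | [], u => u
  | (d, a, _b) :: rest, _ => if d then a else topOf rest _b

def DWalk.top {U : Type} {E : U → U → Prop} {u v : U} (w : DWalk E u v) : U :=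
  topOf w.steps u

def TopsA {U : Type} (E : U → U → Prop) (A : Set U) (u v : U) : Set U :=
  {t | ∃ w : DWalk E u v, w.DConn A ∧ w.top = t}

def anAvoid {U : Type} (E : U → U → Prop) (A : Set U) (x : U) : Set U :=
  {u | u ∉ A ∧ Relation.ReflTransGen (fun a b => E a b ∧ a ∉ A ∧ b ∉ A) u x}

def EA {U : Type} (E : U → U → Prop) (A : Set U) (n1 n2 : U) : Set (U × U) :=
  {e | E e.1 e.2 ∧ e.1 ∈ TopsA E A n1 n2 ∧ e.2 ∈ anAvoid E A n1 ∧ e.2 ∉ TopsA E A n1 n2}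

def IsProperPath {U : Type} (E : U → U → Prop) (A : Set U) (l : List U) : Prop :=
  l ≠ [] ∧ List.Chain' (fun a b => E a b ∧ a ∉ A) l

def DigraphCov {U : Type} [Fintype U] [DecidableEq U] (E : U → U → Prop) :
    Set (Matrix U U ℝ) :=
  {S | ∃ Λ Ω : Matrix U U ℝ, SupportedOn E Λ ∧ Ω.IsDiag ∧ (∀ u, 0 < Ω u u) ∧
        S = ((1 - Λ)⁻¹)ᵀ * Ω * (1 - Λ)⁻¹}

def BSupported {V : Type} (B : SimpleGraph V) (Ω : Matrix V V ℝ) : Prop :=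
  ∀ u v, u ≠ v → ¬ B.Adj u v → Ω u v = 0

def MixedCov {V : Type} [Fintype V] [DecidableEq V] (D : V → V → Prop)
    (B : SimpleGraph V) : Set (Matrix V V ℝ) :=
  {S | ∃ Λ Ω : Matrix V V ℝ, SupportedOn D Λ ∧ Ω.PosDef ∧ BSupported B Ω ∧
        S = ((1 - Λ)⁻¹)ᵀ * Ω * (1 - Λ)⁻¹}

def StrictlyGaussianCausal {V : Type} [Fintype V] [DecidableEq V]
    (D : V → V → Prop) (B : SimpleGraph V) : Prop :=
  ∃ (U : Type) (iF : Fintype U) (iD : DecidableEq U) (ι : V ↪ U) (E : U → U → Prop),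
    Acyclic E ∧
      (fun S : Matrix U U ℝ => S.submatrix ι ι) '' (@DigraphCov U iF iD E) = MixedCov D B

def Chordal {V : Type} (B : SimpleGraph V) : Prop :=
  ∀ n : ℕ, 4 ≤ n → ∀ f : ZMod n → V, Function.Injective f →
    (∀ i, B.Adj (f i) (f (i + 1))) →
    ∃ i j : ZMod n, j ≠ i + 1 ∧ i ≠ j + 1 ∧ i ≠ j ∧ B.Adj (f i) (f j)

def ChainGraph {V : Type} (D : V → V → Prop) (B : SimpleGraph V) : Prop :=
  ¬ ∃ u v, D u v ∧ Relation.ReflTransGen (fun a b => D a b ∨ B.Adj a b) v u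


namespace Stmt11Aux

variable {U : Type} {E : U → U → Prop} {A : Set U}

def edgeOK (E : U → U → Prop) (s : Bool × U × U) : Prop :=
  (s.1 = true → E s.2.1 s.2.2) ∧ (s.1 = false → E s.2.2 s.2.1)

def Seg (E : U → U → Prop) (A : Set U) (a b : U) (L : List (Bool × U × U)) : Prop :=
  (∀ s ∈ L, edgeOK E s) ∧
  List.Chain' (fun s t : Bool × U × U => s.2.2 = t.2.1) L ∧
  List.Chain' (stepPairOK A) L ∧
  (L = [] → a = b) ∧
  ∀ h : L ≠ [], (L.head h).2.1 = a ∧ (L.getLast h).2.2 = b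

lemma Seg.append {a b c : U} {L1 L2 : List (Bool × U × U)}
    (h1 : Seg E A a b L1) (h2 : Seg E A b c L2)
    (hj : ∀ s1 ∈ L1.getLast?, ∀ s2 ∈ L2.head?, stepPairOK A s1 s2) :
    Seg E A a c (L1 ++ L2) := by
  obtain ⟨e1, g1, o1, n1, p1⟩ := h1
  obtain ⟨e2, g2, o2, n2, p2⟩ := h2
  refine ⟨?_, ?_, ?_, ?_, ?_⟩
  · intro s hs; rcases List.mem_append.1 hs with h | h
    exacts [e1 s h, e2 s h]
  · rw [List.Chain', List.isChain_append]
    refine ⟨g1, g2, ?_⟩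
    intro x hx y hy
    have hL1 : L1 ≠ [] := by rintro rfl; simp at hx
    have hL2 : L2 ≠ [] := by rintro rfl; simp at hy
    rw [List.getLast?_eq_getLast hL1, Option.mem_some_iff] at hx
    rw [List.head?_eq_head hL2, Option.mem_some_iff] at hy
    rw [← hx, ← hy, (p1 hL1).2, (p2 hL2).1]
  · rw [List.Chain', List.isChain_append]; exact ⟨o1, o2, hj⟩
  · intro h; rcases List.append_eq_nil_iff.mp h with ⟨r1, r2⟩; exact (n1 r1).trans (n2 r2)
  · intro h
    constructor
    · by_cases hL1 : L1 = []
      · subst hL1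
        simp only [List.nil_append] at h ⊢
        exact (n1 rfl) ▸ (p2 h).1
      · rw [List.head_append_left hL1]; exact (p1 hL1).1
    · by_cases hL2 : L2 = []
      · subst hL2
        simp only [List.append_nil] at h ⊢
        exact (n2 rfl) ▸ (p1 h).2
      · rw [List.getLast_append_of_ne_nil _ hL2]; exact (p2 hL2).2

def mkSteps (d : Bool) : List U → List (Bool × U × U)
  | [] => []
  | [_] => []
  | a :: b :: t => (d, a, b) :: mkSteps d (b :: t)

lemma mkSteps_fst (d : Bool) : ∀ (q : List U), ∀ s ∈ mkSteps d q, s.1 = d := by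
  intro q
  induction q with
  | nil => simp [mkSteps]
  | cons a q ih =>
    cases q with
    | nil => simp [mkSteps]
    | cons b t =>
      intro s hs
      rcases List.mem_cons.1 hs with rfl | hs
      · rfl
      · exact ih s hs

lemma mkSteps_ne (d : Bool) (a b : U) (t : List U) : mkSteps d (a :: b :: t) ≠ [] := by
  simp [mkSteps]

lemma seg_mkSteps (d : Bool) : ∀ (q : List U) (hq : q ≠ []),
    List.Chain' (fun x y => cond d (E x y) (E y x)) q →
    (∀ y ∈ q.tail.dropLast, y ∉ A) →
    Seg E A (q.head hq) (q.getLast hq) (mkSteps d q) := by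
  intro q
  induction q with
  | nil => intro hq; exact absurd rfl hq
  | cons a q ih =>
    intro _ hch hint
    cases q with
    | nil =>
      refine ⟨by simp [mkSteps], List.IsChain.nil, List.IsChain.nil, fun _ => rfl, ?_⟩
      intro h; exact absurd rfl h
    | cons b t =>
      have hch' : List.Chain' (fun x y => cond d (E x y) (E y x)) (b :: t) := hch.tail
      have hint' : ∀ y ∈ (b :: t).tail.dropLast, y ∉ A := by
        intro y hy
        apply hint
        cases t with
        | nil => simp at hy
        | cons c t' =>
          simp only [List.tail_cons] at hy ⊢
          rw [List.dropLast_cons₂]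
          exact List.mem_cons_of_mem _ hy
      obtain ⟨e', g', o', n', p'⟩ := ih (by simp) hch' hint'
      have hmk : mkSteps d (a :: b :: t) = (d, a, b) :: mkSteps d (b :: t) := rfl
      have hrel : cond d (E a b) (E b a) := (List.isChain_cons_cons.1 hch).1
      refine ⟨?_, ?_, ?_, by simp [hmk], ?_⟩
      · intro s hs
        rw [hmk] at hs
        rcases List.mem_cons.1 hs with rfl | hs
        · cases d with
          | false => exact ⟨by simp, fun _ => hrel⟩
          | true => exact ⟨fun _ => hrel, by simp⟩
        · exact e' s hs
      · rw [hmk, List.Chain', List.isChain_cons]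
        refine ⟨?_, g'⟩
        intro y hy
        have hne2 : mkSteps d (b :: t) ≠ [] := by
          rintro hnil; rw [hnil] at hy; simp at hy
        rw [List.head?_eq_head hne2, Option.mem_some_iff] at hy
        rw [← hy]
        exact ((p' hne2).1).symm
      · rw [hmk, List.Chain', List.isChain_cons]
        refine ⟨?_, o'⟩
        intro y hy
        have hne2 : mkSteps d (b :: t) ≠ [] := by
          rintro hnil; rw [hnil] at hy; simp at hy
        have hyd : y.1 = d := mkSteps_fst d _ y (List.mem_of_mem_head? hy)
        have hbt : t ≠ [] := by
          rintro rfl; exact hne2 rfl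
        have hbA : b ∉ A := by
          apply hint
          obtain ⟨c, t', rfl⟩ := List.exists_cons_of_ne_nil hbt
          simp
        constructor
        · rintro ⟨h1, h2⟩
          rw [hyd] at h2; rw [h2] at h1; simp at h1
        · intro _; exact hbA
      · intro _
        refine ⟨rfl, ?_⟩
        cases t with
        | nil => simp [mkSteps]
        | cons c t' =>
          have hne2 : mkSteps d (b :: c :: t') ≠ [] := mkSteps_ne d b c t'
          show (((d, a, b) :: mkSteps d (b :: c :: t')).getLast (by simp)).2.2 = _
          rw [List.getLast_cons hne2, (p' hne2).2,
            List.getLast_cons (l := b :: c :: t') (by simp)]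

lemma topOf_append_fwd : ∀ (P : List (Bool × U × U)) (a c d : U) (L : List (Bool × U × U)),
    (∀ s ∈ P, s.1 = false) → topOf (P ++ (true, c, d) :: L) a = c := by
  intro P
  induction P with
  | nil => intro a c d L _; simp [topOf]
  | cons s P ih =>
    intro a c d L hP
    obtain ⟨b, x, y⟩ := s
    have hb : b = false := hP _ List.mem_cons_self
    subst hb
    show topOf ((false, x, y) :: (P ++ (true, c, d) :: L)) a = c
    have hstep : topOf ((false, x, y) :: (P ++ (true, c, d) :: L)) a
        = topOf (P ++ (true, c, d) :: L) y := by
      simp [topOf]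
    rw [hstep]
    exact ih y c d L (fun t ht => hP t (List.mem_cons_of_mem _ ht))

lemma suffixFromTop : ∀ (L : List (Bool × U × U)) (a b : U),
    (∀ s ∈ L, edgeOK E s) →
    List.Chain' (fun s t : Bool × U × U => s.2.2 = t.2.1) L →
    List.Chain' (stepPairOK A) L →
    (∀ h : L ≠ [], (L.head h).2.1 ∉ A) →
    (L = [] → b = a) →
    (∀ h : L ≠ [], (L.getLast h).2.2 = b) →
    ∃ suf : List (Bool × U × U), Seg E A (topOf L a) b suf ∧
      ∀ hs : suf ≠ [], (suf.head hs).1 = true ∧ topOf L a ∉ A := by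
  intro L
  induction L with
  | nil =>
    intro a b _ _ _ _ hb _
    refine ⟨[], ⟨by simp, List.IsChain.nil, List.IsChain.nil, fun _ => (hb rfl).symm, fun h => absurd rfl h⟩, ?_⟩
    intro h; exact absurd rfl h
  | cons s L ih =>
    intro a b he hg ho hhead hb hlast
    obtain ⟨d, x, y⟩ := s
    cases d with
    | true =>
      refine ⟨(true, x, y) :: L, ⟨he, hg, ho, by simp, ?_⟩, ?_⟩
      · intro h
        refine ⟨?_, hlast (by simp)⟩
        show x = topOf ((true, x, y) :: L) a
        simp [topOf]
      · intro hs
        refine ⟨rfl, ?_⟩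
        have h1 : topOf ((true, x, y) :: L) a = x := by simp [topOf]
        rw [h1]
        simpa using hhead (by simp)
    | false =>
      have htop : topOf ((false, x, y) :: L) a = topOf L y := by simp [topOf]
      rw [htop]
      cases L with
      | nil =>
        refine ⟨[], ⟨by simp, List.IsChain.nil, List.IsChain.nil, fun _ => ?_, fun h => absurd rfl h⟩, fun h => absurd rfl h⟩
        have := hlast (by simp)
        simp only [List.getLast_singleton] at this
        simp [topOf, this]
      | cons t L' =>
        apply ih y b
        · intro s hs; exact he s (List.mem_cons_of_mem _ hs)
        · exact hg.tail
        · exact ho.tail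
        · intro h
          have hglue : y = t.2.1 := (List.isChain_cons_cons.1 hg).1
          have hok : stepPairOK A (false, x, y) t := (List.isChain_cons_cons.1 ho).1
          have : y ∉ A := hok.2 (by simp)
          rw [List.head_cons]
          rw [← hglue]
          exact this
        · intro h; exact absurd h (by simp)
        · intro h
          have := hlast (by simp)
          rwa [List.getLast_cons (by simp)] at this

lemma chain_not_mem (R : U → U → Prop) (hR : ∀ a b, R a b → b ∉ A) :
    ∀ (lst : List U) (v : U), List.Chain R v lst → ∀ x ∈ lst, x ∉ A := by
  intro lst
  induction lst with
  | nil => simp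
  | cons y t ih =>
    intro v hch x hx
    rcases List.chain_cons.1 hch with ⟨hvy, hch'⟩
    rcases List.mem_cons.1 hx with rfl | hx
    · exact hR _ _ hvy
    · exact ih y hch' x hx

lemma firstA (R : U → U → Prop) :
    ∀ (m : List U) (hm : m ≠ []), List.Chain' R m → m.head hm ∉ A → m.getLast hm ∈ A →
    ∃ (y : U) (t : List U), List.Chain' R (m.head hm :: y :: t) ∧
      ((m.head hm :: y :: t).getLast (by simp)) ∈ A ∧
      ∀ z ∈ (m.head hm :: y :: t).dropLast, z ∉ A := by
  intro m
  induction m with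
  | nil => intro hm; exact absurd rfl hm
  | cons x rest ih =>
    intro _ hch hxA hlA
    cases rest with
    | nil => simp only [List.head_cons, List.getLast_singleton] at hxA hlA; exact absurd hlA hxA
    | cons y t =>
      by_cases hy : y ∈ A
      · refine ⟨y, [], ?_, by simpa, ?_⟩
        · simp only [List.head_cons]
          exact List.isChain_pair.2 (List.isChain_cons_cons.1 hch).1
        · intro z hz
          simp only [List.head_cons, List.dropLast_cons₂] at hz
          simp at hz
          subst hz; exact hxA
      · have hlast : (y :: t).getLast (by simp) ∈ A := by
          have := hlA
          rwa [List.getLast_cons (by simp)] at this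
        obtain ⟨y', t', hch', hlA', hdl'⟩ := ih (by simp) hch.tail (by simpa using hy) hlast
        simp only [List.head_cons] at hch' hlA' hdl' ⊢
        refine ⟨y, y' :: t', ?_, ?_, ?_⟩
        · exact List.isChain_cons_cons.2 ⟨(List.isChain_cons_cons.1 hch).1, hch'⟩
        · rwa [List.getLast_cons (by simp)]
        · intro z hz
          rw [List.dropLast_cons₂] at hz
          rcases List.mem_cons.1 hz with rfl | hz
          · exact hxA
          · exact hdl' z hz

lemma mem_reverse_tail {l : List U} {y : U} (hy : y ∈ l.reverse.tail) : y ∈ l.dropLast := by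
  rcases List.eq_nil_or_concat l with rfl | ⟨l', a, rfl⟩
  · simp at hy
  · simp only [List.concat_eq_append, List.reverse_append, List.reverse_cons, List.reverse_nil,
      List.nil_append, List.singleton_append, List.tail_cons, List.mem_reverse] at hy
    simpa using hy

lemma mkSteps_ne_of_len (d : Bool) (q : List U) (h : 2 ≤ q.length) : mkSteps d q ≠ [] := by
  match q, h with
  | a :: b :: t, _ => exact mkSteps_ne d a b t

lemma zip_tail_suffix : ∀ (l : List U) (e : U × U), e ∈ l.zip l.tail → ∃ t, e.1 :: e.2 :: t <:+ l := by
  intro l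
  induction l with
  | nil => simp
  | cons a l ih =>
    intro e he
    cases l with
    | nil => simp at he
    | cons b t =>
      simp only [List.tail_cons, List.zip_cons_cons] at he
      rcases List.mem_cons.1 he with rfl | he
      · exact ⟨t, List.suffix_refl _⟩
      · obtain ⟨t', ht'⟩ := ih e he
        exact ⟨t', ht'.trans (List.suffix_cons a (b :: t))⟩

end Stmt11Aux


theorem stmt11 {U : Type} (E : U → U → Prop) (hE : Acyclic E) (A : Set U)
    {p : ℕ} (hp : 4 ≤ p) (cyc : Fin p ↪ U) (hA : ∀ i, cyc i ∉ A)
    (hdc : ∀ i j : Fin p, i ≠ j →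
      ((∃ w : DWalk E (cyc i) (cyc j), w.DConn A) ↔ cycAdj p i j))
    (l : List U) (hne : l ≠ []) (hl : IsProperPath E A l)
    (htarget : l.getLast hne ∈ A) :
    ∀ e ∈ l.zip l.tail, e ∉ EA E A (cyc ⟨0, by omega⟩) (cyc ⟨1, by omega⟩) := by
  intro e he heEA
  set n1 := cyc ⟨0, by omega⟩ with hn1
  set n2 := cyc ⟨1, by omega⟩ with hn2
  obtain ⟨hEuv, ⟨w, hwdc, hwtop⟩, ⟨hvA, hrt⟩, hvnot⟩ := heEA
  have hn1A : n1 ∉ A := hA _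
  have hn2A : n2 ∉ A := hA _
  -- suffix of l starting at e.1
  obtain ⟨t, pre, hpre⟩ := Stmt11Aux.zip_tail_suffix l e he
  have hsufne : (e.1 :: e.2 :: t) ≠ [] := by simp
  have hsufch : List.Chain' (fun a b => E a b ∧ a ∉ A) (e.1 :: e.2 :: t) :=
    hl.2.suffix ⟨pre, hpre⟩
  subst hpre
  rw [List.getLast_append_of_ne_nil _ hsufne] at htarget
  have hlastA : (e.1 :: e.2 :: t).getLast hsufne ∈ A := htarget
  -- the list m from e.2 onwards
  have hmne : (e.2 :: t) ≠ [] := by simp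
  have hmch : List.Chain' (fun a b => E a b ∧ a ∉ A) (e.2 :: t) := hsufch.tail
  have hmlast : (e.2 :: t).getLast hmne ∈ A := by
    rwa [List.getLast_cons hmne] at hlastA
  obtain ⟨y, qt, hqch, hqlast, hqdl⟩ :=
    Stmt11Aux.firstA (A := A) (fun a b => E a b ∧ a ∉ A) (e.2 :: t) hmne hmch hvA hmlast
  simp only [List.head_cons] at hqch hqlast hqdl
  set q : List U := e.2 :: y :: qt with hq
  set z : U := q.getLast (by simp) with hz
  have hzA : z ∈ A := hqlast
  -- the directed path from e.2 to n1 avoiding A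
  obtain ⟨lst, hlch, hllast⟩ := List.exists_isChain_cons_of_relationReflTransGen hrt
  set rl : List U := e.2 :: lst with hrl
  have hrlch : List.Chain' (fun a b => E a b ∧ a ∉ A ∧ b ∉ A) rl := hlch
  have hrlA : ∀ x ∈ rl, x ∉ A := by
    intro x hx
    rcases List.mem_cons.1 hx with rfl | hx
    · exact hvA
    · exact Stmt11Aux.chain_not_mem _ (fun a b hab => hab.2.2) lst e.2 hlch x hx
  have hrlne : rl ≠ [] := by simp [hrl]
  have hrlrne : rl.reverse ≠ [] := by simp [hrl]
  -- segment P : from n1 down to e.2 (backward steps)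
  have hPseg0 := Stmt11Aux.seg_mkSteps (E := E) (A := A) false rl.reverse hrlrne
    (by
      rw [List.Chain', List.isChain_reverse]
      exact hrlch.imp (fun a b hab => hab.1))
    (by
      intro x hx
      exact hrlA x (List.mem_of_mem_dropLast
        (Stmt11Aux.mem_reverse_tail (List.mem_of_mem_dropLast hx))))
  rw [List.head_reverse, List.getLast_reverse] at hPseg0
  rw [hllast] at hPseg0
  have hPseg : Stmt11Aux.Seg E A n1 e.2 (Stmt11Aux.mkSteps false rl.reverse) := by
    simpa [hrl] using hPseg0
  set P := Stmt11Aux.mkSteps false rl.reverse with hP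
  have hPfst : ∀ s ∈ P, s.1 = false := Stmt11Aux.mkSteps_fst false rl.reverse
  -- segment Fwd : from e.2 up to z (forward steps)
  have hqne : q ≠ [] := by simp [hq]
  have hFseg0 := Stmt11Aux.seg_mkSteps (E := E) (A := A) true q hqne
    (hqch.imp (fun a b hab => hab.1))
    (by
      intro x hx
      apply hqdl
      simp only [hq, List.tail_cons] at hx
      rw [hq, List.dropLast_cons₂]
      exact List.mem_cons_of_mem _ hx)
  have hFseg : Stmt11Aux.Seg E A e.2 z (Stmt11Aux.mkSteps true q) := by
    simpa [hq, hz] using hFseg0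
  set Fwd := Stmt11Aux.mkSteps true q with hF
  have hFne : Fwd ≠ [] := by rw [hF, hq]; exact Stmt11Aux.mkSteps_ne true _ _ _
  -- segment Bwd : from z down to e.2 (backward steps)
  have hqrne : q.reverse ≠ [] := by simp [hq]
  have hBseg0 := Stmt11Aux.seg_mkSteps (E := E) (A := A) false q.reverse hqrne
    (by
      rw [List.Chain', List.isChain_reverse]
      exact hqch.imp (fun a b hab => hab.1))
    (by
      intro x hx
      exact hqdl x (Stmt11Aux.mem_reverse_tail (List.mem_of_mem_dropLast hx)))
  rw [List.head_reverse, List.getLast_reverse] at hBseg0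
  have hBseg : Stmt11Aux.Seg E A z e.2 (Stmt11Aux.mkSteps false q.reverse) := by
    simpa [hq, hz] using hBseg0
  set Bwd := Stmt11Aux.mkSteps false q.reverse with hB
  have hBne : Bwd ≠ [] := by
    rw [hB]
    exact Stmt11Aux.mkSteps_ne_of_len false q.reverse (by simp [hq])
  have hBfst : ∀ s ∈ Bwd, s.1 = false := Stmt11Aux.mkSteps_fst false q.reverse
  -- single backward step from e.2 to e.1
  have hSseg : Stmt11Aux.Seg E A e.2 e.1 [(false, e.2, e.1)] := by
    refine ⟨?_, List.IsChain.singleton _, List.IsChain.singleton _, by simp, fun h => ⟨rfl, rfl⟩⟩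
    intro s hs
    simp only [List.mem_singleton] at hs
    subst hs
    exact ⟨by simp, fun _ => hEuv⟩
  -- suffix of w from its top
  have hwtop' : topOf w.steps n1 = e.1 := hwtop
  obtain ⟨suf, hsufseg, hsufhd⟩ := Stmt11Aux.suffixFromTop (E := E) (A := A) w.steps n1 n2
    w.edge w.chain hwdc
    (by intro h; rw [w.first_eq]; exact hn1A)
    (fun h => absurd h w.ne)
    (fun h => w.last_eq)
  rw [hwtop'] at hsufseg hsufhd
  -- compose all segments
  have hS1 : Stmt11Aux.Seg E A e.2 n2 ([(false, e.2, e.1)] ++ suf) := by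
    refine hSseg.append hsufseg ?_
    intro s1 hs1 s2 hs2
    simp only [List.getLast?_singleton, Option.mem_some_iff] at hs1
    subst hs1
    have hsne : suf ≠ [] := by rintro rfl; simp at hs2
    constructor
    · rintro ⟨h1, -⟩; simp at h1
    · intro _
      exact (hsufhd hsne).2
  have hS2 : Stmt11Aux.Seg E A z n2 (Bwd ++ ([(false, e.2, e.1)] ++ suf)) := by
    refine hBseg.append hS1 ?_
    intro s1 hs1 s2 hs2
    rw [List.getLast?_eq_getLast hBne, Option.mem_some_iff] at hs1
    subst hs1
    have h1 : (Bwd.getLast hBne).1 = false := hBfst _ (List.getLast_mem hBne)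
    constructor
    · rintro ⟨hh, -⟩; rw [h1] at hh; simp at hh
    · intro _
      rw [(hBseg.2.2.2.2 hBne).2]
      exact hvA
  have hS3 : Stmt11Aux.Seg E A e.2 n2 (Fwd ++ (Bwd ++ ([(false, e.2, e.1)] ++ suf))) := by
    refine hFseg.append hS2 ?_
    intro s1 hs1 s2 hs2
    rw [List.getLast?_eq_getLast hFne, Option.mem_some_iff] at hs1
    subst hs1
    have h1 : (Fwd.getLast hFne).1 = true := Stmt11Aux.mkSteps_fst true q _ (List.getLast_mem hFne)
    have h22 : (Fwd.getLast hFne).2.2 = z := (hFseg.2.2.2.2 hFne).2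
    have hs2B : s2 ∈ Bwd := by
      rw [List.head?_append_of_ne_nil _ hBne] at hs2
      exact List.mem_of_mem_head? hs2
    have h2 : s2.1 = false := hBfst _ hs2B
    constructor
    · intro _; rw [h22]; exact hzA
    · intro hcon; exact absurd ⟨h1, h2⟩ hcon
  have hS4 : Stmt11Aux.Seg E A n1 n2 (P ++ (Fwd ++ (Bwd ++ ([(false, e.2, e.1)] ++ suf)))) := by
    refine hPseg.append hS3 ?_
    intro s1 hs1 s2 hs2
    have hPne : P ≠ [] := by rintro hnil; rw [hnil] at hs1; simp at hs1
    rw [List.getLast?_eq_getLast hPne, Option.mem_some_iff] at hs1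
    subst hs1
    have h1 : (P.getLast hPne).1 = false := hPfst _ (List.getLast_mem hPne)
    constructor
    · rintro ⟨hh, -⟩; rw [h1] at hh; simp at hh
    · intro _
      rw [(hPseg.2.2.2.2 hPne).2]
      exact hvA
  set total := P ++ (Fwd ++ (Bwd ++ ([(false, e.2, e.1)] ++ suf))) with htotal
  have htne : total ≠ [] := by
    rw [htotal]
    simp [hFne]
  obtain ⟨hedge, hglue, hok, -, hends⟩ := hS4
  refine hvnot ⟨⟨total, htne, (hends htne).1, (hends htne).2, hedge, hglue⟩, hok, ?_⟩
  -- compute the top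
  show topOf total n1 = e.2
  have hFwd_cons : Fwd = (true, e.2, y) :: Stmt11Aux.mkSteps true (y :: qt) := by
    rw [hF, hq]; rfl
  rw [htotal, hFwd_cons]
  rw [List.cons_append, List.cons_append]
  exact Stmt11Aux.topOf_append_fwd P n1 e.2 y _ hPfst
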